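/- Let f : [a₀,b₀] → ℂ be continuous with |f(t)| ≥ η for all t and g : [a₀,b₀] → ℂ continuous with |g(t)| = 1 for all t. Then for every ε > 0 there exists δ > 0 such that for every continuous d with ‖d‖_∞ ≤ δ there is a continuous φ : [a₀,b₀] → ℂ with ‖φ‖_∞ ≤ ε and f(t) φ(t) + g(t) φ(t)² = d(t) for all t. -/

import Mathlib

lemma sqrt_re_nonneg' (z : ℂ) : 0 ≤ (z ^ ((2:ℂ)⁻¹)).re := by
  rcases eq_or_ne z 0 with rfl | hz
  · simp [Complex.zero_cpow (by norm_num : ((2:ℂ)⁻¹) ≠ 0)]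
  · rw [Complex.cpow_def_of_ne_zero hz, Complex.exp_re]
    have him : (Complex.log z * (2:ℂ)⁻¹).im = z.arg / 2 := by
      simp [Complex.mul_im, Complex.log_im]; ring
    rw [him]
    have h1 : -(Real.pi/2) ≤ z.arg / 2 := by
      have := Complex.neg_pi_lt_arg z; linarith
    have h2 : z.arg / 2 ≤ Real.pi/2 := by
      have := Complex.arg_le_pi z; linarith
    exact mul_nonneg (Real.exp_nonneg _) (Real.cos_nonneg_of_mem_Icc ⟨h1, h2⟩)



/-- If `|f| ≥ η > 0` and `|g| = 1` on `[a₀,b₀]`, then for every `ε > 0` there is `δ > 0`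
such that every continuous `d` with `‖d‖_∞ ≤ δ` can be written as `f φ + g φ²` for some
continuous `φ` with `‖φ‖_∞ ≤ ε`. -/
theorem stmt_18 (a₀ b₀ : ℝ) (hab : a₀ < b₀) (η : ℝ) (hη : 0 < η) (f g : ℝ → ℂ)
    (hfc : ContinuousOn f (Set.Icc a₀ b₀)) (hgc : ContinuousOn g (Set.Icc a₀ b₀))
    (hf : ∀ t ∈ Set.Icc a₀ b₀, η ≤ ‖f t‖)
    (hg : ∀ t ∈ Set.Icc a₀ b₀, ‖g t‖ = 1) :
    ∀ ε : ℝ, 0 < ε → ∃ δ : ℝ, 0 < δ ∧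
      ∀ d : ℝ → ℂ, ContinuousOn d (Set.Icc a₀ b₀) →
        (∀ t ∈ Set.Icc a₀ b₀, ‖d t‖ ≤ δ) →
        ∃ φ : ℝ → ℂ, ContinuousOn φ (Set.Icc a₀ b₀) ∧
          (∀ t ∈ Set.Icc a₀ b₀, ‖φ t‖ ≤ ε) ∧
          (∀ t ∈ Set.Icc a₀ b₀, f t * φ t + g t * (φ t) ^ 2 = d t) := by
  intro ε hε
  refine ⟨min (ε * η / 2) (η^2 / 8), by positivity, ?_⟩
  intro d hdc hd
  set w : ℝ → ℂ := fun t => 4 * g t * d t / (f t) ^ 2 with hw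
  set s : ℝ → ℂ := fun t => (1 + w t) ^ ((2:ℂ)⁻¹) with hsdef
  set φ : ℝ → ℂ := fun t => f t * (s t - 1) / (2 * g t) with hφdef
  -- pointwise facts
  have hfne : ∀ t ∈ Set.Icc a₀ b₀, f t ≠ 0 := fun t ht => by
    intro h; have := hf t ht; rw [h] at this; simp at this; linarith
  have hgne : ∀ t ∈ Set.Icc a₀ b₀, g t ≠ 0 := fun t ht => by
    intro h; have := hg t ht; rw [h] at this; simp at this
  have hwb : ∀ t ∈ Set.Icc a₀ b₀, ‖w t‖ ≤ 1/2 := by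
    intro t ht
    have h1 : ‖w t‖ = 4 * ‖d t‖ / (‖f t‖)^2 := by
      simp [hw, map_div₀, map_mul, map_pow, hg t ht]
    rw [h1]
    have hft := hf t ht
    have hdt : ‖d t‖ ≤ η^2/8 := (hd t ht).trans (min_le_right _ _)
    have hfp : 0 < ‖f t‖ := lt_of_lt_of_le hη hft
    rw [div_le_iff₀ (by positivity)]
    nlinarith [norm_nonneg (d t)]
  have hre : ∀ t ∈ Set.Icc a₀ b₀, (0:ℝ) < (1 + w t).re := by
    intro t ht
    have := hwb t ht
    have h2 : |(w t).re| ≤ ‖w t‖ := Complex.abs_re_le_norm _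
    have : (1 + w t).re = 1 + (w t).re := by simp
    rw [this]
    cases' abs_le.mp h2 with hl hr
    linarith
  have hne1 : ∀ t ∈ Set.Icc a₀ b₀, (1 : ℂ) + w t ≠ 0 := by
    intro t ht h
    have := hre t ht; rw [h] at this; simp at this
  have hs2 : ∀ t ∈ Set.Icc a₀ b₀, (s t) ^ 2 = 1 + w t := by
    intro t ht
    simp [hsdef]
  have hsre : ∀ t, 0 ≤ (s t).re := fun t => sqrt_re_nonneg' _
  have hs1 : ∀ t ∈ Set.Icc a₀ b₀, ‖s t - 1‖ ≤ ‖w t‖ := by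
    intro t ht
    have hmul : (s t - 1) * (s t + 1) = w t := by
      have := hs2 t ht; ring_nf; linear_combination this
    have hge : (1:ℝ) ≤ ‖s t + 1‖ := by
      calc (1:ℝ) ≤ (s t + 1).re := by simpa using hsre t
      _ ≤ ‖s t + 1‖ := Complex.re_le_norm _
    calc ‖s t - 1‖ = ‖s t - 1‖ * 1 := by ring
      _ ≤ ‖s t - 1‖ * ‖s t + 1‖ := by
          exact mul_le_mul_of_nonneg_left hge (norm_nonneg _)
      _ = ‖w t‖ := by rw [← norm_mul, hmul]
  refine ⟨φ, ?_, ?_, ?_⟩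
  · -- continuity
    have hwc : ContinuousOn w (Set.Icc a₀ b₀) := by
      exact ((continuousOn_const.mul hgc).mul hdc).div (hfc.pow 2)
        (fun t ht => pow_ne_zero 2 (hfne t ht))
    have hsc : ContinuousOn s (Set.Icc a₀ b₀) := by
      apply ContinuousOn.cpow_const (continuousOn_const.add hwc)
      intro t ht
      exact Complex.mem_slitPlane_of_norm_lt_one (by
        simpa using lt_of_le_of_lt (hwb t ht) (by norm_num))
    exact (hfc.mul (hsc.sub continuousOn_const)).div (continuousOn_const.mul hgc)
      (fun t ht => by simpa using hgne t ht)
  · -- bound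
    intro t ht
    have h1 : ‖φ t‖ = ‖f t‖ * ‖s t - 1‖ / 2 := by
      simp [hφdef, map_div₀, map_mul, hg t ht]
    rw [h1]
    have h2 := hs1 t ht
    have hwabs : ‖w t‖ = 4 * ‖d t‖ / (‖f t‖)^2 := by
      simp [hw, map_div₀, map_mul, map_pow, hg t ht]
    have hft := hf t ht
    have hfp : 0 < ‖f t‖ := lt_of_lt_of_le hη hft
    have hdt : ‖d t‖ ≤ ε * η / 2 := (hd t ht).trans (min_le_left _ _)
    have h3 : ‖f t‖ * ‖s t - 1‖ ≤
        ‖f t‖ * (4 * ‖d t‖ / (‖f t‖)^2) := by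
      apply mul_le_mul_of_nonneg_left _ (norm_nonneg _)
      rw [← hwabs]; exact h2
    have h4 : ‖f t‖ * (4 * ‖d t‖ / (‖f t‖)^2)
        = 4 * ‖d t‖ / ‖f t‖ := by
      field_simp
    have h5 : 4 * ‖d t‖ / ‖f t‖ ≤ 4 * (ε*η/2) / η := by
      apply div_le_div₀ (by positivity) (by linarith) hη hft
    have h6 : 4 * (ε*η/2) / η = 2 * ε := by field_simp; ring
    linarith [h3, h4 ▸ h3]
  · -- equation
    intro t ht
    have hs2t := hs2 t ht
    have hft := hfne t ht
    have hgt := hgne t ht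
    simp only [hφdef, hw] at hs2t ⊢
    field_simp at hs2t ⊢
    ring_nf
    ring_nf at hs2t
    linear_combination hs2t
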